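/- Let (Ω,𝔉,m) be a probability space and let 𝔔 : L¹(m) → L¹(m) be a linear operator that is positive (F ≥ 0 implies 𝔔F ≥ 0) and integral-preserving (∫𝔔F dm = ∫F dm for every F ∈ L¹(m)). Suppose there exists γ ∈ (0,1] such that 𝔔F ≥ γ m-a.e. for every probability density F (i.e., every F ≥ 0 with ∫F dm = 1). Then there exists a unique probability density H* with 𝔔H* = H*; moreover H* > 0 m-a.e., and there exist constants γ₄ ∈ (0,1) and γ₅ > 0 such that ∫|𝔔ⁿF − H*| dm ≤ γ₅ γ₄ⁿ for every probability density F and every n ≥ 1 (one may take γ₄ = 1−γ and γ₅ = 2). -/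

import Mathlib

open MeasureTheory Filter

set_option maxHeartbeats 1000000
/-- Theorem 4.7 / Lemma 4.8, via the Doeblin-type criterion of
Lasota–Mackey: let `𝔔 : L¹(m) → L¹(m)` be a positive, integral-preserving linear operator
on a probability space `(Ω, 𝔉, m)` such that `𝔔F ≥ γ` a.e. for every probability density
`F`, for some `γ ∈ (0,1]`.  Then there is a unique probability density `H*` with
`𝔔H* = H*`; moreover `H* > 0` a.e., and there are constants `γ₄ ∈ (0,1)`, `γ₅ > 0`
(one may take `γ₄ = 1 − γ`, `γ₅ = 2`) with `∫ |𝔔ⁿF − H*| dm ≤ γ₅ γ₄ⁿ` for every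
probability density `F` and every `n ≥ 1`. -/
theorem stmt_8 {Ω : Type*} [MeasurableSpace Ω] (m : Measure Ω) [IsProbabilityMeasure m]
    (Q : Lp ℝ 1 m →ₗ[ℝ] Lp ℝ 1 m)
    (hpos : ∀ F : Lp ℝ 1 m, 0 ≤ F → 0 ≤ Q F)
    (hint : ∀ F : Lp ℝ 1 m, ∫ ω, (Q F : Ω → ℝ) ω ∂m = ∫ ω, (F : Ω → ℝ) ω ∂m)
    (γ : ℝ) (hγ0 : 0 < γ) (hγ1 : γ ≤ 1)
    (hlb : ∀ F : Lp ℝ 1 m, 0 ≤ F → ∫ ω, (F : Ω → ℝ) ω ∂m = 1 →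
      ∀ᵐ ω ∂m, γ ≤ (Q F : Ω → ℝ) ω) :
    ∃ H : Lp ℝ 1 m,
      (0 ≤ H ∧ ∫ ω, (H : Ω → ℝ) ω ∂m = 1 ∧ Q H = H) ∧
      (∀ᵐ ω ∂m, 0 < (H : Ω → ℝ) ω) ∧
      (∀ H' : Lp ℝ 1 m, 0 ≤ H' → ∫ ω, (H' : Ω → ℝ) ω ∂m = 1 → Q H' = H' → H' = H) ∧
      ∃ γ₄ γ₅ : ℝ, γ₄ ∈ Set.Ioo (0:ℝ) 1 ∧ 0 < γ₅ ∧
        ∀ F : Lp ℝ 1 m, 0 ≤ F → ∫ ω, (F : Ω → ℝ) ω ∂m = 1 →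
        ∀ n : ℕ, 1 ≤ n →
          ∫ ω, |(((⇑Q)^[n] F : Lp ℝ 1 m) : Ω → ℝ) ω - (H : Ω → ℝ) ω| ∂m
            ≤ γ₅ * γ₄ ^ n := by
  classical
  -- basic integrability / norm facts
  have hInt : ∀ f : Lp ℝ 1 m, Integrable (⇑f) m := fun f => L1.integrable_coeFn f
  have hnorm : ∀ f : Lp ℝ 1 m, ‖f‖ = ∫ ω, |(f : Ω → ℝ) ω| ∂m := by
    intro f
    rw [L1.norm_eq_integral_norm]
    simp [Real.norm_eq_abs]
  have hsub : ∀ f g : Lp ℝ 1 m,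
      ∫ ω, ((f - g : Lp ℝ 1 m) : Ω → ℝ) ω ∂m
        = ∫ ω, (f : Ω → ℝ) ω ∂m - ∫ ω, (g : Ω → ℝ) ω ∂m := by
    intro f g
    rw [integral_congr_ae (Lp.coeFn_sub f g)]
    exact integral_sub (hInt f) (hInt g)
  have hadd : ∀ f g : Lp ℝ 1 m,
      ∫ ω, ((f + g : Lp ℝ 1 m) : Ω → ℝ) ω ∂m
        = ∫ ω, (f : Ω → ℝ) ω ∂m + ∫ ω, (g : Ω → ℝ) ω ∂m := by
    intro f g
    rw [integral_congr_ae (Lp.coeFn_add f g)]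
    exact integral_add (hInt f) (hInt g)
  -- norm of a density is 1
  have hnd : ∀ F : Lp ℝ 1 m, 0 ≤ F → ∫ ω, (F : Ω → ℝ) ω ∂m = 1 → ‖F‖ = 1 := by
    intro F hF hFi
    rw [hnorm, ← hFi]
    apply integral_congr_ae
    filter_upwards [(Lp.coeFn_nonneg F).2 hF] with ω hω
    exact abs_of_nonneg hω
  -- the key Doeblin contraction estimate
  have hkey : ∀ F G : Lp ℝ 1 m, 0 ≤ F → ∫ ω, (F : Ω → ℝ) ω ∂m = 1 →
      0 ≤ G → ∫ ω, (G : Ω → ℝ) ω ∂m = 1 →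
      ‖Q F - Q G‖ ≤ (1 - γ) * ‖F - G‖ := by
    intro F G hF hFi hG hGi
    set D : Lp ℝ 1 m := F - G with hD
    set P : Lp ℝ 1 m := D⁺ with hP
    set N : Lp ℝ 1 m := D⁻ with hN
    have hPN : P - N = D := posPart_sub_negPart D
    have hP0 : 0 ≤ P := posPart_nonneg D
    have hN0 : 0 ≤ N := negPart_nonneg D
    set c : ℝ := ∫ ω, (P : Ω → ℝ) ω ∂m with hc
    have hDint : ∫ ω, (D : Ω → ℝ) ω ∂m = 0 := by
      rw [hD, hsub, hFi, hGi]; ring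
    have hNint : ∫ ω, (N : Ω → ℝ) ω ∂m = c := by
      have h := hsub P N
      rw [hPN, hDint] at h
      linarith
    have hc0 : 0 ≤ c := integral_nonneg_of_ae ((Lp.coeFn_nonneg P).2 hP0)
    have habs : ‖D‖ = 2 * c := by
      rw [hnorm]
      have h1 : (fun ω => |(D : Ω → ℝ) ω|) =ᵐ[m] ⇑(P + N) := by
        have h2 : P + N = |D| := posPart_add_negPart D
        filter_upwards [Lp.coeFn_abs D] with ω hω
        rw [h2, hω]
      rw [integral_congr_ae h1, hadd, hNint, ← hc]
      ring
    have hQFG : Q F - Q G = Q P - Q N := by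
      rw [← map_sub, ← map_sub, hPN, hD]
    rcases eq_or_lt_of_le hc0 with hczero | hcpos
    · -- degenerate case: F = G a.e.
      have hD0 : D = 0 := by
        have : ‖D‖ = 0 := by rw [habs, ← hczero]; ring
        exact norm_eq_zero.mp this
      have hQ0 : Q F - Q G = 0 := by
        rw [← map_sub, ← hD, hD0, map_zero]
      rw [hQ0, norm_zero, habs, ← hczero]
      simp
    · -- the real case
      have hQlb : ∀ X : Lp ℝ 1 m, 0 ≤ X → (∫ ω, (X : Ω → ℝ) ω ∂m) = c →
          ∀ᵐ ω ∂m, γ * c ≤ (Q X : Ω → ℝ) ω := by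
        intro X hX hXi
        have h1 : 0 ≤ c⁻¹ • X := by
          rw [← Lp.coeFn_nonneg]
          filter_upwards [Lp.coeFn_smul c⁻¹ X, (Lp.coeFn_nonneg X).2 hX] with ω hω1 hω2
          rw [hω1]
          exact mul_nonneg (inv_nonneg.2 hc0) hω2
        have h2 : ∫ ω, ((c⁻¹ • X : Lp ℝ 1 m) : Ω → ℝ) ω ∂m = 1 := by
          rw [integral_congr_ae (Lp.coeFn_smul c⁻¹ X)]
          simp only [Pi.smul_apply, smul_eq_mul]
          rw [integral_const_mul, hXi, inv_mul_cancel₀ hcpos.ne']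
        have h3 := hlb _ h1 h2
        have h4 : Q X = c • Q (c⁻¹ • X) := by
          rw [← _root_.map_smul, smul_smul, mul_inv_cancel₀ hcpos.ne', one_smul]
        have h5 : ⇑(Q X) =ᵐ[m] c • ⇑(Q (c⁻¹ • X)) := by
          rw [h4]; exact Lp.coeFn_smul c (Q (c⁻¹ • X))
        filter_upwards [h3, h5] with ω hω1 hω2
        rw [hω2]
        simp only [Pi.smul_apply, smul_eq_mul]
        calc γ * c = c * γ := by ring
        _ ≤ c * (Q (c⁻¹ • X) : Ω → ℝ) ω := by
            exact mul_le_mul_of_nonneg_left hω1 hc0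
      have hQP := hQlb P hP0 rfl
      have hQN := hQlb N hN0 hNint
      have hlept : (fun ω => |((Q P - Q N : Lp ℝ 1 m) : Ω → ℝ) ω|)
          ≤ᵐ[m] fun ω => (Q P : Ω → ℝ) ω + (Q N : Ω → ℝ) ω - 2 * (γ * c) := by
        filter_upwards [Lp.coeFn_sub (Q P) (Q N), hQP, hQN] with ω h1 h2 h3
        simp only [Pi.sub_apply] at h1
        rw [h1, abs_le]
        constructor <;> linarith
      have hi1 : Integrable (fun ω => (Q P : Ω → ℝ) ω + (Q N : Ω → ℝ) ω) m :=
        (hInt (Q P)).add (hInt (Q N))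
      have hi2 : Integrable (fun ω => (Q P : Ω → ℝ) ω + (Q N : Ω → ℝ) ω - 2 * (γ * c)) m :=
        hi1.sub (integrable_const _)
      have hbound : ‖Q F - Q G‖ ≤ 2 * c - 2 * (γ * c) := by
        rw [hQFG, hnorm]
        calc ∫ ω, |((Q P - Q N : Lp ℝ 1 m) : Ω → ℝ) ω| ∂m
            ≤ ∫ ω, ((Q P : Ω → ℝ) ω + (Q N : Ω → ℝ) ω - 2 * (γ * c)) ∂m :=
              integral_mono_ae ((hInt _).abs) hi2 hlept
          _ = 2 * c - 2 * (γ * c) := by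
              rw [integral_sub hi1 (integrable_const _),
                integral_add (hInt (Q P)) (hInt (Q N)), hint P, hint N, hNint, integral_const]
              simp
              linarith [hc]
      rw [habs]
      have hring : (1 - γ) * (2 * c) = 2 * c - 2 * (γ * c) := by ring
      linarith
  -- Q is a norm contraction on all of L¹
  have hQnorm : ∀ F : Lp ℝ 1 m, ‖Q F‖ ≤ ‖F‖ := by
    intro F
    set P : Lp ℝ 1 m := F⁺ with hP
    set N : Lp ℝ 1 m := F⁻ with hN
    have hPN : P - N = F := posPart_sub_negPart F
    have hQF : Q F = Q P - Q N := by rw [← map_sub, hPN]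
    have h1 : (fun ω => |(Q F : Ω → ℝ) ω|)
        ≤ᵐ[m] fun ω => (Q P : Ω → ℝ) ω + (Q N : Ω → ℝ) ω := by
      have h2 : ⇑(Q F) =ᵐ[m] ⇑(Q P) - ⇑(Q N) := by
        rw [hQF]; exact Lp.coeFn_sub (Q P) (Q N)
      filter_upwards [h2, (Lp.coeFn_nonneg (Q P)).2 (hpos P (posPart_nonneg F)),
        (Lp.coeFn_nonneg (Q N)).2 (hpos N (negPart_nonneg F))] with ω hω1 hω2 hω3
      simp only [Pi.sub_apply] at hω1
      simp only [Pi.zero_apply] at hω2 hω3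
      rw [hω1, abs_le]
      constructor <;> linarith
    have h3 : (fun ω => |(F : Ω → ℝ) ω|) =ᵐ[m] ⇑(P + N) := by
      have h2 : P + N = |F| := posPart_add_negPart F
      filter_upwards [Lp.coeFn_abs F] with ω hω
      rw [h2, hω]
    rw [hnorm, hnorm, integral_congr_ae h3, hadd]
    have hi1 : Integrable (fun ω => (Q P : Ω → ℝ) ω + (Q N : Ω → ℝ) ω) m :=
      (hInt (Q P)).add (hInt (Q N))
    calc ∫ ω, |(Q F : Ω → ℝ) ω| ∂m
        ≤ ∫ ω, ((Q P : Ω → ℝ) ω + (Q N : Ω → ℝ) ω) ∂m :=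
          integral_mono_ae ((hInt _).abs) hi1 h1
      _ = ∫ ω, (P : Ω → ℝ) ω ∂m + ∫ ω, (N : Ω → ℝ) ω ∂m := by
          rw [integral_add (hInt (Q P)) (hInt (Q N)), hint P, hint N]
      _ = _ := rfl
  have hQcont : Continuous ⇑Q :=
    AddMonoidHomClass.continuous_of_bound Q 1 (by simpa using hQnorm)
  -- iterates preserve densities
  have hit_pos : ∀ (F : Lp ℝ 1 m) (n : ℕ), 0 ≤ F → 0 ≤ (⇑Q)^[n] F := by
    intro F n hF
    induction n with
    | zero => simpa using hF
    | succ k ih => rw [Function.iterate_succ_apply']; exact hpos _ ih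
  have hit_int : ∀ (F : Lp ℝ 1 m) (n : ℕ), ∫ ω, (F : Ω → ℝ) ω ∂m = 1 →
      ∫ ω, (((⇑Q)^[n] F : Lp ℝ 1 m) : Ω → ℝ) ω ∂m = 1 := by
    intro F n hF
    induction n with
    | zero => simpa using hF
    | succ k ih => rw [Function.iterate_succ_apply', hint]; exact ih
  have h1γ0 : (0:ℝ) ≤ 1 - γ := by linarith
  -- iterated contraction
  have hiter : ∀ F G : Lp ℝ 1 m, 0 ≤ F → ∫ ω, (F : Ω → ℝ) ω ∂m = 1 →
      0 ≤ G → ∫ ω, (G : Ω → ℝ) ω ∂m = 1 → ∀ n : ℕ,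
      ‖(⇑Q)^[n] F - (⇑Q)^[n] G‖ ≤ (1 - γ) ^ n * ‖F - G‖ := by
    intro F G hF hFi hG hGi n
    induction n with
    | zero => simp
    | succ k ih =>
      rw [Function.iterate_succ_apply', Function.iterate_succ_apply']
      calc ‖Q ((⇑Q)^[k] F) - Q ((⇑Q)^[k] G)‖
          ≤ (1 - γ) * ‖(⇑Q)^[k] F - (⇑Q)^[k] G‖ :=
            hkey _ _ (hit_pos F k hF) (hit_int F k hFi) (hit_pos G k hG) (hit_int G k hGi)
        _ ≤ (1 - γ) * ((1 - γ) ^ k * ‖F - G‖) := by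
            exact mul_le_mul_of_nonneg_left ih h1γ0
        _ = (1 - γ) ^ (k + 1) * ‖F - G‖ := by ring
  set γ₄ : ℝ := 1 - γ / 2 with hγ₄
  have hγ₄0 : 0 < γ₄ := by rw [hγ₄]; linarith
  have hγ₄1 : γ₄ < 1 := by rw [hγ₄]; linarith
  have h1γle : 1 - γ ≤ γ₄ := by rw [hγ₄]; linarith
  have hiter2 : ∀ F G : Lp ℝ 1 m, 0 ≤ F → ∫ ω, (F : Ω → ℝ) ω ∂m = 1 →
      0 ≤ G → ∫ ω, (G : Ω → ℝ) ω ∂m = 1 → ∀ n : ℕ,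
      ‖(⇑Q)^[n] F - (⇑Q)^[n] G‖ ≤ 2 * γ₄ ^ n := by
    intro F G hF hFi hG hGi n
    have h1 : ‖F - G‖ ≤ 2 := by
      calc ‖F - G‖ ≤ ‖F‖ + ‖G‖ := norm_sub_le F G
        _ = 2 := by rw [hnd F hF hFi, hnd G hG hGi]; norm_num
    calc ‖(⇑Q)^[n] F - (⇑Q)^[n] G‖ ≤ (1 - γ) ^ n * ‖F - G‖ :=
          hiter F G hF hFi hG hGi n
      _ ≤ γ₄ ^ n * 2 := by
          apply mul_le_mul (pow_le_pow_left₀ h1γ0 h1γle n) h1 (norm_nonneg _)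
            (le_of_lt (pow_pos hγ₄0 n))
      _ = 2 * γ₄ ^ n := by ring
  -- the starting density : the constant function 1
  have hm1 : MemLp (fun _ : Ω => (1:ℝ)) 1 m := memLp_const 1
  set F₀ : Lp ℝ 1 m := hm1.toLp _ with hF₀
  have hF₀pos : 0 ≤ F₀ := by
    rw [← Lp.coeFn_nonneg]
    filter_upwards [hm1.coeFn_toLp] with ω hω
    rw [hω]; norm_num
  have hF₀int : ∫ ω, (F₀ : Ω → ℝ) ω ∂m = 1 := by
    rw [integral_congr_ae hm1.coeFn_toLp]
    simp
  -- the sequence of iterates is Cauchy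
  have hQF₀pos : 0 ≤ Q F₀ := hpos _ hF₀pos
  have hQF₀int : ∫ ω, (Q F₀ : Ω → ℝ) ω ∂m = 1 := by rw [hint]; exact hF₀int
  have hcauchy : CauchySeq (fun n => (⇑Q)^[n] F₀) := by
    apply cauchySeq_of_le_geometric γ₄ 2 hγ₄1
    intro n
    rw [dist_eq_norm]
    have : (⇑Q)^[n + 1] F₀ = (⇑Q)^[n] (Q F₀) := Function.iterate_succ_apply ⇑Q n F₀
    rw [this]
    exact hiter2 F₀ (Q F₀) hF₀pos hF₀int hQF₀pos hQF₀int n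
  obtain ⟨H, hH⟩ := cauchySeq_tendsto_of_complete hcauchy
  -- H is a fixed density
  have hQH : Q H = H := by
    have h1 : Tendsto (fun n => Q ((⇑Q)^[n] F₀)) atTop (nhds (Q H)) :=
      (hQcont.tendsto H).comp hH
    have h2 : (fun n => Q ((⇑Q)^[n] F₀)) = fun n => (⇑Q)^[n + 1] F₀ :=
      funext fun n => (Function.iterate_succ_apply' ⇑Q n F₀).symm
    rw [h2] at h1
    have h3 : Tendsto (fun n => (⇑Q)^[n + 1] F₀) atTop (nhds H) :=
      hH.comp (tendsto_add_atTop_nat 1)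
    exact tendsto_nhds_unique h1 h3
  have hHpos : 0 ≤ H :=
    le_of_tendsto_of_tendsto' tendsto_const_nhds hH (fun n => hit_pos F₀ n hF₀pos)
  have hHint : ∫ ω, (H : Ω → ℝ) ω ∂m = 1 := by
    have h1 : Tendsto (fun n => ∫ ω, (((⇑Q)^[n] F₀ : Lp ℝ 1 m) : Ω → ℝ) ω ∂m)
        atTop (nhds (∫ ω, (H : Ω → ℝ) ω ∂m)) := (continuous_integral.tendsto H).comp hH
    have h2 : (fun n => ∫ ω, (((⇑Q)^[n] F₀ : Lp ℝ 1 m) : Ω → ℝ) ω ∂m) = fun _ => (1:ℝ) :=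
      funext fun n => hit_int F₀ n hF₀int
    rw [h2] at h1
    exact tendsto_nhds_unique h1 tendsto_const_nhds
  refine ⟨H, ⟨hHpos, hHint, hQH⟩, ?_, ?_, ?_⟩
  · -- a.e. positivity
    filter_upwards [hlb H hHpos hHint] with ω hω
    rw [hQH] at hω
    linarith
  · -- uniqueness
    intro H' hH'pos hH'int hQH'
    have h1 : ∀ n : ℕ, ‖H' - H‖ ≤ 2 * γ₄ ^ n := by
      intro n
      have h2 := hiter2 H' H hH'pos hH'int hHpos hHint n
      rwa [Function.iterate_fixed hQH' n, Function.iterate_fixed hQH n] at h2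
    have h3 : Tendsto (fun n : ℕ => 2 * γ₄ ^ n) atTop (nhds 0) := by
      have := (tendsto_pow_atTop_nhds_zero_of_lt_one (le_of_lt hγ₄0) hγ₄1).const_mul 2
      simpa using this
    have h4 : ‖H' - H‖ ≤ 0 := ge_of_tendsto' h3 h1
    have h5 : ‖H' - H‖ = 0 := le_antisymm h4 (norm_nonneg _)
    rw [norm_eq_zero, sub_eq_zero] at h5
    exact h5
  · -- geometric convergence
    refine ⟨γ₄, 2, ⟨hγ₄0, hγ₄1⟩, by norm_num, ?_⟩
    intro F hF hFi n _
    have h1 : ∫ ω, |(((⇑Q)^[n] F : Lp ℝ 1 m) : Ω → ℝ) ω - (H : Ω → ℝ) ω| ∂m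
        = ‖(⇑Q)^[n] F - (⇑Q)^[n] H‖ := by
      rw [Function.iterate_fixed hQH n, hnorm]
      apply integral_congr_ae
      filter_upwards [Lp.coeFn_sub ((⇑Q)^[n] F) H] with ω hω
      rw [hω]
      rfl
    rw [h1]
    exact hiter2 F H hF hFi hHpos hHint n
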